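/- Let R be a regular S-graded ring such that S satisfies condition (Δ). Then every homogeneous element of the graded Brown–McCoy radical 𝒢(R) is G-regular, and 𝒢(R) contains every homogeneous ideal of R all of whose homogeneous elements are G-regular. -/
import Mathlib


/-!
Common framework: S-graded rings (rings that are direct sums of additive
subgroups indexed by a set S, with homogeneous products homogeneous),
homogeneous ideals, graded modules, and the various Brown--McCoy radicals.
-/

universe u v w

/-- An `S`-graded ring structure on a (not necessarily unital or commutative)
associative ring `R`: a family of additive subgroups indexed by a nonempty set `S`
whose internal direct sum is `R`, such that whenever `R_s · R_t ≠ 0` there is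
`u ∈ S` with `R_s · R_t ⊆ R_u`. -/
structure SGraded (S : Type v) (R : Type w) [NonUnitalRing R] where
  component : S → AddSubgroup R
  nonemptyS : Nonempty S
  independent : iSupIndep component
  iSup_eq_top : (⨆ s, component s) = ⊤
  mul_cond : ∀ s t : S, (∃ a ∈ component s, ∃ b ∈ component t, a * b ≠ 0) →
    ∃ u : S, ∀ a ∈ component s, ∀ b ∈ component t, a * b ∈ component u

namespace SGraded

variable {S : Type v} {R : Type w} [NonUnitalRing R] (G : SGraded S R)

/-- A homogeneous element. -/
def Homog (a : R) : Prop := ∃ s, a ∈ G.component s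

/-- The homogeneous part `A = ⋃ s, R_s` of `R`. -/
def homogPart : Set R := {a : R | G.Homog a}

/-- Two homogeneous elements are addable if one is `0` or they have the same degree. -/
def Addable (a b : R) : Prop := a = 0 ∨ b = 0 ∨ ∃ s, a ∈ G.component s ∧ b ∈ G.component s

/-- `ε ∈ S` is idempotent: `R_ε · R_ε ≠ 0` and `R_ε · R_ε ⊆ R_ε`. -/
def IsIdem (ε : S) : Prop :=
  (∃ a ∈ G.component ε, ∃ b ∈ G.component ε, a * b ≠ 0) ∧
  ∀ a ∈ G.component ε, ∀ b ∈ G.component ε, a * b ∈ G.component ε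

/-- Condition (Δ): the product of two nonidempotent degrees is never idempotent. -/
def CondDelta : Prop := ∀ s t u : S,
  (∃ a ∈ G.component s, ∃ b ∈ G.component t, a * b ≠ 0) →
  (∀ a ∈ G.component s, ∀ b ∈ G.component t, a * b ∈ G.component u) →
  ¬ G.IsIdem s → ¬ G.IsIdem t → ¬ G.IsIdem u

/-- Regularity (cancellativity) of the grading. -/
def Regular : Prop := ∀ a b c : R, G.Homog a → G.Homog b → G.Homog c →
  a ≠ 0 → b ≠ 0 → c ≠ 0 →
  ((a * c ≠ 0 → b * c ≠ 0 → G.Addable (a * c) (b * c) → G.Addable a b) ∧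
   (c * a ≠ 0 → c * b ≠ 0 → G.Addable (c * a) (c * b) → G.Addable a b))

end SGraded

section Rings

variable {R : Type w} [NonUnitalRing R]

/-- A right ideal of `R`, as an additive subgroup. -/
def IsRightIdeal (I : AddSubgroup R) : Prop := ∀ x ∈ I, ∀ r : R, x * r ∈ I

/-- A two-sided ideal of `R`, as an additive subgroup. -/
def IsTwoSidedIdeal' (I : AddSubgroup R) : Prop := ∀ x ∈ I, ∀ r : R, x * r ∈ I ∧ r * x ∈ I

/-- The right ideal of `R` generated by a set. -/
def rightIdealGen (T : Set R) : AddSubgroup R :=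
  sInf {I : AddSubgroup R | T ⊆ I ∧ IsRightIdeal I}

/-- A right ideal of the (sub)ring `E`, as an additive subgroup of `R` contained in `E`. -/
def IsRightIdealOn (E I : AddSubgroup R) : Prop := I ≤ E ∧ ∀ x ∈ I, ∀ r ∈ E, x * r ∈ I

/-- A two-sided ideal of the (sub)ring `E`. -/
def IsIdealOn (E I : AddSubgroup R) : Prop :=
  I ≤ E ∧ ∀ x ∈ I, ∀ r ∈ E, x * r ∈ I ∧ r * x ∈ I

/-- The largest two-sided ideal of the (sub)ring `E` contained in `J`. -/
def coreOn (E J : AddSubgroup R) : AddSubgroup R :=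
  sSup {K : AddSubgroup R | IsIdealOn E K ∧ K ≤ J}

/-- A maximal right ideal of the (sub)ring `E`. -/
def IsMaxRightIdealOn (E J : AddSubgroup R) : Prop :=
  IsRightIdealOn E J ∧ J ≠ E ∧ ∀ K : AddSubgroup R, IsRightIdealOn E K → J < K → K ≤ E → K = E

/-- A modular two-sided ideal of the (sub)ring `E`:
there is `e ∈ E` with `ea - a ∈ J` and `ae - a ∈ J` for all `a ∈ E`. -/
def IsModularIdealOn (E J : AddSubgroup R) : Prop :=
  ∃ e ∈ E, ∀ a ∈ E, e * a - a ∈ J ∧ a * e - a ∈ J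

/-- The classical Brown--McCoy radical of the (sub)ring `E`: the intersection of all
two-sided ideals `I` of `E` such that `E/I` is a simple ring with identity. -/
def brownMcCoyOn (E : AddSubgroup R) : Set R :=
  {a : R | a ∈ E ∧ ∀ I : AddSubgroup R, IsIdealOn E I → I ≠ E →
    IsModularIdealOn E I →
    (∀ K : AddSubgroup R, IsIdealOn E K → I ≤ K → K ≤ E → K = I ∨ K = E) → a ∈ I}

/-- `e` is a unity modulo `I`. -/
def IsUnityMod (e : R) (I : AddSubgroup R) : Prop := ∀ a : R, e * a - a ∈ I ∧ a * e - a ∈ I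

/-- `x` is a G-regular element of the (sub)ring `E`: there is no proper two-sided
ideal `I` of `E` such that `x` is a unity modulo `I`. -/
def GRegularOn (E : AddSubgroup R) (x : R) : Prop :=
  ∀ I : AddSubgroup R, IsIdealOn E I → I ≠ E →
    ¬ (∀ a ∈ E, x * a - a ∈ I ∧ a * x - a ∈ I)

end Rings

namespace SGraded

variable {S : Type v} {R : Type w} [NonUnitalRing R] (G : SGraded S R)

/-- An additive subgroup generated (as an additive group) by its homogeneous elements. -/
def IsHomSubgroup (I : AddSubgroup R) : Prop :=
  I = AddSubgroup.closure {a : R | a ∈ I ∧ G.Homog a}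

/-- A homogeneous right ideal of `R`. -/
def IsHomRightIdeal (I : AddSubgroup R) : Prop := IsRightIdeal I ∧ G.IsHomSubgroup I

/-- A homogeneous (two-sided) ideal of `R`. -/
def IsHomIdeal (I : AddSubgroup R) : Prop := IsTwoSidedIdeal' I ∧ G.IsHomSubgroup I

/-- `Ǐ`: the largest homogeneous ideal of `R` contained in `I`. -/
def core (I : AddSubgroup R) : AddSubgroup R :=
  sSup {J : AddSubgroup R | G.IsHomIdeal J ∧ J ≤ I}

/-- A homogeneous right ideal, maximal among the proper homogeneous right ideals of `R`. -/
def IsMaxHomRightIdeal (I : AddSubgroup R) : Prop :=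
  G.IsHomRightIdeal I ∧ I ≠ ⊤ ∧ ∀ K : AddSubgroup R, G.IsHomRightIdeal K → I < K → K = ⊤

/-- A modular homogeneous ideal of `R`: a homogeneous ideal admitting a homogeneous
unity modulo it. -/
def IsModularHomIdeal (I : AddSubgroup R) : Prop :=
  G.IsHomIdeal I ∧ ∃ e, G.Homog e ∧ IsUnityMod e I

/-- A homogeneous element is G-regular if it is a unity modulo no proper homogeneous
ideal of `R`. -/
def GRegular (x : R) : Prop :=
  ∀ I : AddSubgroup R, G.IsHomIdeal I → I ≠ ⊤ → ¬ IsUnityMod x I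

/-- The quotient graded ring `R/J` (graded by the images of the components) is a
regular simple graded ring whose identity is the image of a homogeneous element:
`R/J` is nonzero, regular, has an identity which is the image of a homogeneous
element of `R`, and has no homogeneous ideals other than `0` and `R/J`. -/
def QuotInM (J : AddSubgroup R) : Prop :=
  J ≠ ⊤ ∧
  (∃ e, G.Homog e ∧ IsUnityMod e J) ∧
  (∀ K : AddSubgroup R, G.IsHomIdeal K → J ≤ K → K = J ∨ K = ⊤) ∧
  (∀ a b c : R, G.Homog a → G.Homog b → G.Homog c → a ∉ J → b ∉ J → c ∉ J →
    ((a * c ∉ J → b * c ∉ J → G.Addable (a * c) (b * c) → G.Addable a b) ∧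
     (c * a ∉ J → c * b ∉ J → G.Addable (c * a) (c * b) → G.Addable a b)))

/-- The graded Brown--McCoy radical `𝒢(R)`: the intersection of all homogeneous right
ideals `I`, maximal among the proper homogeneous right ideals, such that `R/Ǐ` is a
regular simple graded ring with identity the image of a homogeneous element. -/
def gradedBM : Set R :=
  {a : R | ∀ I : AddSubgroup R, G.IsMaxHomRightIdeal I → G.QuotInM (G.core I) → a ∈ I}

/-- The quotient right `R`-module `R/J` (graded by the images of the components) is a
graded-simple graded right `R`-module, phrased inside `R`. -/
def QuotGradedSimple (J : AddSubgroup R) : Prop :=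
  (∃ x a : R, G.Homog x ∧ G.Homog a ∧ x * a ∉ J) ∧
  (∀ K : AddSubgroup R, G.IsHomRightIdeal K → J ≤ K → K = J ∨ K = ⊤) ∧
  (∀ I : AddSubgroup R, G.IsHomIdeal I → (∃ r : R, ∃ b ∈ I, r * b ∉ J) →
    ∃ b ∈ I, ∀ x : R, G.Homog x → x * b - x ∈ J)

end SGraded

/-- A graded right module over an `S`-graded ring `R`: a right `R`-module structure on
an additive commutative group `M` together with a family of additive subgroups indexed
by a nonempty set `D` whose internal direct sum is `M` and with `M_d · R_s ⊆ M_t`. -/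
structure GradedRightModule {S : Type v} {R : Type w} [NonUnitalRing R]
    (G : SGraded S R) (M : Type u) [AddCommGroup M] where
  smul : M → R → M
  add_smul : ∀ (x y : M) (a : R), smul (x + y) a = smul x a + smul y a
  smul_add : ∀ (x : M) (a b : R), smul x (a + b) = smul x a + smul x b
  smul_mul : ∀ (x : M) (a b : R), smul x (a * b) = smul (smul x a) b
  D : Type u
  nonemptyD : Nonempty D
  mcomp : D → AddSubgroup M
  mindependent : iSupIndep mcomp
  miSup_eq_top : (⨆ d, mcomp d) = ⊤
  graded : ∀ (d : D) (s : S), ∃ t : D, ∀ x ∈ mcomp d, ∀ r ∈ G.component s, smul x r ∈ mcomp t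

namespace GradedRightModule

variable {S : Type v} {R : Type w} [NonUnitalRing R] {G : SGraded S R}
  {M : Type u} [AddCommGroup M] (gm : GradedRightModule G M)

/-- A homogeneous element of `M`. -/
def HomogM (x : M) : Prop := ∃ d, x ∈ gm.mcomp d

/-- Addability of homogeneous elements of `M`. -/
def AddableM (x y : M) : Prop := x = 0 ∨ y = 0 ∨ ∃ d, x ∈ gm.mcomp d ∧ y ∈ gm.mcomp d

/-- A homogeneous submodule of `M`: a submodule generated (as an additive group)
by its homogeneous elements. -/
def IsHomSubmodule (N : AddSubgroup M) : Prop :=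
  (∀ x ∈ N, ∀ r : R, gm.smul x r ∈ N) ∧
  N = AddSubgroup.closure {x : M | x ∈ N ∧ gm.HomogM x}

/-- `M` is graded-irreducible. -/
def GradedIrreducible : Prop :=
  (∃ (x : M) (a : R), gm.HomogM x ∧ G.Homog a ∧ gm.smul x a ≠ 0) ∧
  ∀ N : AddSubgroup M, gm.IsHomSubmodule N → N = ⊥ ∨ N = ⊤

/-- `M` is graded-simple: graded-irreducible and for every homogeneous ideal `I` of `R`
with `M·I ≠ 0` there is `b ∈ I` acting as identity on all homogeneous elements of `M`. -/
def GradedSimple : Prop :=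
  gm.GradedIrreducible ∧
  ∀ I : AddSubgroup R, G.IsHomIdeal I → (∃ x : M, ∃ b ∈ I, gm.smul x b ≠ 0) →
    ∃ b ∈ I, ∀ x : M, gm.HomogM x → gm.smul x b = x

/-- `M` is a regular graded module. -/
def ModRegular : Prop :=
  ∀ (x : M) (a b : R), gm.HomogM x → G.Homog a → G.Homog b →
    gm.smul x a ≠ 0 → gm.smul x b ≠ 0 →
    gm.AddableM (gm.smul x a) (gm.smul x b) → G.Addable a b

end GradedRightModule

/-- The large graded Brown--McCoy radical `G_l(R)`: the homogeneous elements
annihilating every graded-simple graded right `R`-module. -/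
def largeGradedBM {S : Type v} {R : Type w} [NonUnitalRing R] (G : SGraded S R) : Set R :=
  {a : R | G.Homog a ∧ ∀ (M : Type u) [AddCommGroup M] (gm : GradedRightModule G M),
    gm.GradedSimple → ∀ x : M, gm.smul x a = 0}

variable {S : Type v} {R : Type w} [NonUnitalRing R]

section Aux

variable {S : Type v} {R : Type w} [NonUnitalRing R]

/-- The idealizer-like subgroup: elements whose left and right multiples all land in `C`. -/
def mulInto (C : AddSubgroup R) : AddSubgroup R where
  carrier := {x : R | ∀ r : R, x * r ∈ C ∧ r * x ∈ C}
  zero_mem' := fun r => by simp [C.zero_mem]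
  add_mem' := by
    intro a b ha hb r
    constructor
    · have := C.add_mem (ha r).1 (hb r).1
      rwa [← add_mul] at this
    · have := C.add_mem (ha r).2 (hb r).2
      rwa [← mul_add] at this
  neg_mem' := by
    intro a ha r
    constructor
    · have := C.neg_mem (ha r).1
      rwa [← neg_mul] at this
    · have := C.neg_mem (ha r).2
      rwa [← mul_neg] at this

theorem sSup_twoSided {𝒮 : Set (AddSubgroup R)} (h : ∀ K ∈ 𝒮, IsTwoSidedIdeal' K) :
    IsTwoSidedIdeal' (sSup 𝒮) := by
  intro x hx r
  have hle : sSup 𝒮 ≤ mulInto (sSup 𝒮) := by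
    apply sSup_le
    intro K hK y hy r
    exact ⟨le_sSup hK (h K hK y hy r).1, le_sSup hK (h K hK y hy r).2⟩
  exact hle hx r

theorem sSup_hom (G : SGraded S R) {𝒮 : Set (AddSubgroup R)}
    (h : ∀ K ∈ 𝒮, G.IsHomSubgroup K) : G.IsHomSubgroup (sSup 𝒮) := by
  apply le_antisymm
  · apply sSup_le
    intro K hK
    refine (h K hK).le.trans (AddSubgroup.closure_mono ?_)
    rintro a ⟨haK, hh⟩
    exact ⟨le_sSup hK haK, hh⟩
  · rw [AddSubgroup.closure_le]
    rintro a ⟨ha, -⟩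
    exact ha

theorem core_isHomIdeal (G : SGraded S R) (J : AddSubgroup R) : G.IsHomIdeal (G.core J) :=
  ⟨sSup_twoSided fun _ hK => hK.1.1, sSup_hom G fun _ hK => hK.1.2⟩

theorem core_le (G : SGraded S R) (J : AddSubgroup R) : G.core J ≤ J :=
  sSup_le fun _ hK => hK.2

theorem sup_twoSided {P Q : AddSubgroup R} (hP : IsTwoSidedIdeal' P) (hQ : IsTwoSidedIdeal' Q) :
    IsTwoSidedIdeal' (P ⊔ Q) := by
  rw [← sSup_pair]
  apply sSup_twoSided
  rintro K (rfl | rfl) <;> assumption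

theorem sup_hom (G : SGraded S R) {P Q : AddSubgroup R} (hP : G.IsHomSubgroup P)
    (hQ : G.IsHomSubgroup Q) : G.IsHomSubgroup (P ⊔ Q) := by
  rw [← sSup_pair]
  apply sSup_hom
  rintro K (rfl | rfl) <;> assumption

/-- Projection lemma: in an independent family, an element of `comp s` that lies in the
sup of subgroups `Ct t ≤ comp t` lies in `Ct s`. -/
theorem mem_comp_proj {comp : S → AddSubgroup R} (hind : iSupIndep comp)
    {Ct : S → AddSubgroup R} (hC : ∀ t, Ct t ≤ comp t) {s : S} {x : R}
    (hx : x ∈ comp s) (hx2 : x ∈ ⨆ t, Ct t) : x ∈ Ct s := by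
  have h1 : (⨆ t, Ct t) ≤ Ct s ⊔ ⨆ t, ⨆ _ : t ≠ s, Ct t := by
    apply iSup_le
    intro t
    by_cases ht : t = s
    · subst ht; exact le_sup_left
    · exact le_trans (le_iSup₂ (f := fun t (_ : t ≠ s) => Ct t) t ht) le_sup_right
  rcases AddSubgroup.mem_sup.mp (h1 hx2) with ⟨y, hy, z, hz, hyz⟩
  have hzD : z ∈ ⨆ t, ⨆ _ : t ≠ s, comp t :=
    (iSup_mono fun t => iSup_mono fun ht => hC t) hz
  have hzs : z ∈ comp s := by
    have : z = x - y := by rw [← hyz]; abel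
    rw [this]
    exact (comp s).sub_mem hx (hC s hy)
  have hz0 : z = 0 := by
    have hle := (hind s).le_bot (α := AddSubgroup R)
    have : z ∈ (⊥ : AddSubgroup R) := hle (AddSubgroup.mem_inf.mpr ⟨hzs, hzD⟩)
    simpa using this
  rw [← hyz, hz0, add_zero]
  exact hy

end Aux

section Aux2

variable {S : Type v} {R : Type w} [NonUnitalRing R]

theorem exists_chain_ub (c : Set (AddSubgroup R)) (hc : IsChain (· ≤ ·) c)
    {y : AddSubgroup R} (hy : y ∈ c) :
    ∃ U : AddSubgroup R, (∀ z ∈ c, z ≤ U) ∧ (∀ a : R, a ∈ U → ∃ K ∈ c, a ∈ K) := by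
  refine ⟨{ carrier := ⋃ K ∈ c, (K : Set R)
            zero_mem' := Set.mem_biUnion hy y.zero_mem
            add_mem' := ?_
            neg_mem' := ?_ }, ?_, ?_⟩
  · rintro a b ha hb
    simp only [Set.mem_iUnion] at ha hb ⊢
    obtain ⟨K₁, hK₁, haK⟩ := ha
    obtain ⟨K₂, hK₂, hbK⟩ := hb
    rcases hc.total hK₁ hK₂ with h | h
    · exact ⟨K₂, hK₂, K₂.add_mem (h haK) hbK⟩
    · exact ⟨K₁, hK₁, K₁.add_mem haK (h hbK)⟩
  · rintro a ha
    simp only [Set.mem_iUnion] at ha ⊢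
    obtain ⟨K, hK, haK⟩ := ha
    exact ⟨K, hK, K.neg_mem haK⟩
  · intro z hz a ha
    exact Set.mem_biUnion hz ha
  · intro a ha
    simpa using ha

theorem homSubgroup_of_mem (G : SGraded S R) {U : AddSubgroup R}
    (h : ∀ a ∈ U, ∃ K : AddSubgroup R, G.IsHomSubgroup K ∧ K ≤ U ∧ a ∈ K) :
    G.IsHomSubgroup U := by
  apply le_antisymm
  · intro a ha
    obtain ⟨K, hKhom, hKU, haK⟩ := h a ha
    have h1 : K = AddSubgroup.closure {b : R | b ∈ K ∧ G.Homog b} := hKhom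
    have h2 : a ∈ AddSubgroup.closure {b : R | b ∈ K ∧ G.Homog b} := h1 ▸ haK
    refine AddSubgroup.closure_mono ?_ h2
    rintro b ⟨hbK, hbh⟩
    exact ⟨hKU hbK, hbh⟩
  · rw [AddSubgroup.closure_le]
    rintro b ⟨hb, -⟩
    exact hb

end Aux2

/-- For a regular `S`-graded ring satisfying condition (Δ), every
homogeneous element of `𝒢(R)` is G-regular, and `𝒢(R)` contains every homogeneous
ideal all of whose homogeneous elements are G-regular. -/
theorem gradedBM_gRegular_and_contains (G : SGraded S R) (hreg : G.Regular)
    (hdelta : G.CondDelta) :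
    (∀ x ∈ G.gradedBM, G.Homog x → G.GRegular x) ∧
    ∀ I : AddSubgroup R, G.IsHomIdeal I → (∀ x ∈ I, G.Homog x → G.GRegular x) →
      (I : Set R) ⊆ G.gradedBM := by
  classical
  have habs : ∀ (x : R) (I : AddSubgroup R), (∀ a : R, x * a - a ∈ I) →
      ∀ K : AddSubgroup R, IsRightIdeal K → I ≤ K → x ∈ K → K = ⊤ := by
    intro x I hU K hKr hIK hxK
    rw [AddSubgroup.eq_top_iff']
    intro a
    have h1 : x * a ∈ K := hKr x hxK a
    have h2 : x * a - a ∈ K := hIK (hU a)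
    have h3 := K.sub_mem h1 h2
    rwa [sub_sub_cancel] at h3
  constructor
  · -- Part 1: homogeneous elements of 𝒢(R) are G-regular
    intro x hxBM hxhom I hI hIne hU
    have hxI : x ∉ I := by
      intro hxI
      exact hIne (habs x I (fun a => (hU a).1) I (fun b hb r => (hI.1 b hb r).1) le_rfl hxI)
    -- Zorn 1 : maximal homogeneous ideal M ⊇ I with x ∉ M
    set P1 : Set (AddSubgroup R) := {K | G.IsHomIdeal K ∧ I ≤ K ∧ x ∉ K} with hP1
    obtain ⟨M, hIM, hMmax⟩ := zorn_le_nonempty₀ P1 (by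
      intro c hcP hc y hy
      obtain ⟨U, hub, hmem⟩ := exists_chain_ub c hc hy
      refine ⟨U, ⟨⟨?_, ?_⟩, ?_, ?_⟩, hub⟩
      · intro b hb r
        obtain ⟨K, hKc, hbK⟩ := hmem b hb
        exact ⟨hub K hKc ((hcP hKc).1.1 b hbK r).1, hub K hKc ((hcP hKc).1.1 b hbK r).2⟩
      · refine homSubgroup_of_mem G ?_
        intro b hb
        obtain ⟨K, hKc, hbK⟩ := hmem b hb
        exact ⟨K, (hcP hKc).1.2, hub K hKc, hbK⟩
      · exact (hcP hy).2.1.trans (hub y hy)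
      · intro hxU
        obtain ⟨K, hKc, hxK⟩ := hmem x hxU
        exact (hcP hKc).2.2 hxK) I ⟨hI, le_rfl, hxI⟩
    obtain ⟨hMideal, hIM', hxM⟩ := hMmax.1
    have hxU' : ∀ a : R, x * a - a ∈ M := fun a => hIM' (hU a).1
    -- maximality of M among homogeneous ideals
    have hMsimp : ∀ K : AddSubgroup R, G.IsHomIdeal K → M ≤ K → K = M ∨ K = ⊤ := by
      intro K hK hMK
      by_cases hxK : x ∈ K
      · exact Or.inr (habs x M hxU' K (fun b hb r => (hK.1 b hb r).1) hMK hxK)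
      · exact Or.inl (le_antisymm (hMmax.2 ⟨hK, hIM'.trans hMK, hxK⟩ hMK) hMK)
    -- Zorn 2 : maximal homogeneous right ideal J ⊇ M with x ∉ J
    set P2 : Set (AddSubgroup R) := {K | G.IsHomRightIdeal K ∧ M ≤ K ∧ x ∉ K} with hP2
    obtain ⟨J, hMJ, hJmax⟩ := zorn_le_nonempty₀ P2 (by
      intro c hcP hc y hy
      obtain ⟨U, hub, hmem⟩ := exists_chain_ub c hc hy
      refine ⟨U, ⟨⟨?_, ?_⟩, ?_, ?_⟩, hub⟩
      · intro b hb r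
        obtain ⟨K, hKc, hbK⟩ := hmem b hb
        exact hub K hKc ((hcP hKc).1.1 b hbK r)
      · refine homSubgroup_of_mem G ?_
        intro b hb
        obtain ⟨K, hKc, hbK⟩ := hmem b hb
        exact ⟨K, (hcP hKc).1.2, hub K hKc, hbK⟩
      · exact (hcP hy).2.1.trans (hub y hy)
      · intro hxU
        obtain ⟨K, hKc, hxK⟩ := hmem x hxU
        exact (hcP hKc).2.2 hxK) M
      ⟨⟨fun b hb r => (hMideal.1 b hb r).1, hMideal.2⟩, le_rfl, hxM⟩
    obtain ⟨hJhri, hMJ', hxJ⟩ := hJmax.1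
    have hJne : J ≠ ⊤ := by
      intro h
      rw [h] at hxJ
      exact hxJ (AddSubgroup.mem_top x)
    have hJmaximal : G.IsMaxHomRightIdeal J := by
      refine ⟨hJhri, hJne, ?_⟩
      intro K hK hJK
      by_cases hxK : x ∈ K
      · exact habs x M hxU' K hK.1 (hMJ'.trans hJK.le) hxK
      · exact absurd (hJmax.2 ⟨hK, hMJ'.trans hJK.le, hxK⟩ hJK.le) (not_le_of_gt hJK)
    have hMcore : M ≤ G.core J := le_sSup ⟨hMideal, hMJ'⟩
    have hcoreM : G.core J = M := by
      refine le_antisymm (hMmax.2 ⟨core_isHomIdeal G J, hIM'.trans hMcore, ?_⟩ hMcore) hMcore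
      intro h
      exact hxJ (core_le G J h)
    have hQuot : G.QuotInM (G.core J) := by
      rw [hcoreM]
      refine ⟨?_, ⟨x, hxhom, fun a => ⟨hIM' (hU a).1, hIM' (hU a).2⟩⟩, ?_, ?_⟩
      · intro h
        rw [h] at hxM
        exact hxM (AddSubgroup.mem_top x)
      · intro K hK hMK
        rcases hMsimp K hK hMK with h | h
        · exact Or.inl h
        · exact Or.inr h
      · intro a b c ha hb hc haM hbM hcM
        have ha0 : a ≠ 0 := fun h => haM (h ▸ M.zero_mem)
        have hb0 : b ≠ 0 := fun h => hbM (h ▸ M.zero_mem)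
        have hc0 : c ≠ 0 := fun h => hcM (h ▸ M.zero_mem)
        obtain ⟨h1, h2⟩ := hreg a b c ha hb hc ha0 hb0 hc0
        constructor
        · intro hac hbc hadd
          exact h1 (fun h => hac (h ▸ M.zero_mem)) (fun h => hbc (h ▸ M.zero_mem)) hadd
        · intro hca hcb hadd
          exact h2 (fun h => hca (h ▸ M.zero_mem)) (fun h => hcb (h ▸ M.zero_mem)) hadd
    exact hxJ (hxBM J hJmaximal hQuot)
  · -- Part 2: homogeneous ideals of G-regular elements lie in 𝒢(R)
    intro I hI hGR a haI
    intro J hJmax hQ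
    obtain ⟨hCne, ⟨e, hehom, heU⟩, hsimp, -⟩ := hQ
    have hCideal := core_isHomIdeal G J
    have hCI : G.IsHomIdeal (G.core J ⊔ I) :=
      ⟨sup_twoSided hCideal.1 hI.1, sup_hom G hCideal.2 hI.2⟩
    rcases hsimp (G.core J ⊔ I) hCI le_sup_left with hK | hK
    · refine core_le G J ?_
      have h1 : a ∈ G.core J ⊔ I := (le_sup_right : I ≤ G.core J ⊔ I) haI
      rwa [hK] at h1
    · exfalso
      obtain ⟨s, hes⟩ := hehom
      have heCI : e ∈ G.core J ⊔ I := by rw [hK]; exact AddSubgroup.mem_top e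
      set T : Set R := {b : R | b ∈ G.core J ∧ G.Homog b} ∪ {b : R | b ∈ I ∧ G.Homog b} with hT
      have hCeq : G.core J = AddSubgroup.closure {b : R | b ∈ G.core J ∧ G.Homog b} :=
        hCideal.2
      have hIeq : I = AddSubgroup.closure {b : R | b ∈ I ∧ G.Homog b} := hI.2
      have hCT : G.core J ⊔ I = AddSubgroup.closure T := by
        rw [hT, AddSubgroup.closure_union, ← hCeq, ← hIeq]
      have hTle : AddSubgroup.closure T ≤
          ⨆ t, AddSubgroup.closure {b ∈ T | b ∈ G.component t} := by
        rw [AddSubgroup.closure_le]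
        intro b hb
        have hbh : G.Homog b := by
          rcases hb with ⟨-, h⟩ | ⟨-, h⟩ <;> exact h
        obtain ⟨t, hbt⟩ := hbh
        exact le_iSup (fun t => AddSubgroup.closure {b ∈ T | b ∈ G.component t}) t
          (AddSubgroup.subset_closure ⟨hb, hbt⟩)
      have hes' : e ∈ AddSubgroup.closure {b ∈ T | b ∈ G.component s} :=
        mem_comp_proj (Ct := fun t => AddSubgroup.closure {b ∈ T | b ∈ G.component t})
          G.independent
          (fun t => AddSubgroup.closure_le _ |>.mpr (fun b hb => hb.2))
          hes (hTle (hCT ▸ heCI))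
      have heCB : e ∈ G.core J ⊔ (I ⊓ G.component s) := by
        refine (AddSubgroup.closure_le _ |>.mpr ?_) hes'
        rintro b ⟨hb | hb, hbs⟩
        · exact (le_sup_left : G.core J ≤ _) hb.1
        · exact (le_sup_right : I ⊓ G.component s ≤ _) (AddSubgroup.mem_inf.mpr ⟨hb.1, hbs⟩)
      rcases AddSubgroup.mem_sup.mp heCB with ⟨cc, hcc, b, hb, hcb⟩
      have hbI : b ∈ I := (AddSubgroup.mem_inf.mp hb).1
      have hbs : b ∈ G.component s := (AddSubgroup.mem_inf.mp hb).2
      refine hGR b hbI ⟨s, hbs⟩ (G.core J) hCideal hCne ?_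
      intro r
      have hbe : b = e - cc := by rw [← hcb]; abel
      constructor
      · have h1 : b * r - r = (e * r - r) - cc * r := by rw [hbe, sub_mul]; abel
        rw [h1]
        exact (G.core J).sub_mem (heU r).1 (hCideal.1 cc hcc r).1
      · have h2 : r * b - r = (r * e - r) - r * cc := by rw [hbe, mul_sub]; abel
        rw [h2]
        exact (G.core J).sub_mem (heU r).2 (hCideal.1 cc hcc r).2
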